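/- The function ν is unbounded: for every natural number N there exists a positive integer n with ν(n) ≥ N. In particular, limsup_{n→∞} ν(n) = ∞. -/

import Mathlib

def F (x y z : ℕ) : ℤ :=
  (x : ℤ) ^ 3 + (y : ℤ) ^ 3 + (z : ℤ) ^ 3 - 3 * (x : ℤ) * (y : ℤ) * (z : ℤ)

noncomputable def nu (n : ℕ) : ℕ :=
  Set.ncard {t : ℕ × ℕ × ℕ |
    t.1 ≤ t.2.1 ∧ t.2.1 ≤ t.2.2 ∧ t.1 + 1 ≤ t.2.2 ∧ F t.1 t.2.1 t.2.2 = n}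

lemma S_finite (n : ℕ) :
    {t : ℕ × ℕ × ℕ |
      t.1 ≤ t.2.1 ∧ t.2.1 ≤ t.2.2 ∧ t.1 + 1 ≤ t.2.2 ∧ F t.1 t.2.1 t.2.2 = n}.Finite := by
  apply Set.Finite.subset (Set.finite_Iic (2 * n, 2 * n, 2 * n))
  rintro ⟨x, y, z⟩ ⟨h1, h2, h3, h4⟩
  simp only [Set.mem_Iic, Prod.le_def]
  have hx1 : (x : ℤ) + 1 ≤ (z : ℤ) := by exact_mod_cast h3
  have hxy : (x : ℤ) ≤ (y : ℤ) := by exact_mod_cast h1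
  have hyz : (y : ℤ) ≤ (z : ℤ) := by exact_mod_cast h2
  have hx0 : (0 : ℤ) ≤ (x : ℤ) := Int.natCast_nonneg x
  have h4' : (x : ℤ) ^ 3 + (y : ℤ) ^ 3 + (z : ℤ) ^ 3
      - 3 * (x : ℤ) * (y : ℤ) * (z : ℤ) = (n : ℤ) := h4
  have hzx : (1 : ℤ) ≤ ((z : ℤ) - x) ^ 2 := by nlinarith
  have hsum : (1 : ℤ) ≤ ((x : ℤ) - y) ^ 2 + ((y : ℤ) - z) ^ 2 + ((z : ℤ) - x) ^ 2 := by
    nlinarith [sq_nonneg ((x : ℤ) - y), sq_nonneg ((y : ℤ) - z)]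
  have hmul : ((x : ℤ) + y + z) *
      (((x : ℤ) - y) ^ 2 + ((y : ℤ) - z) ^ 2 + ((z : ℤ) - x) ^ 2 - 1) ≥ 0 := by
    apply mul_nonneg (by positivity) (by linarith)
  have hz : (z : ℤ) ≤ 2 * n := by nlinarith
  have hz' : z ≤ 2 * n := by exact_mod_cast hz
  exact ⟨le_trans (h1.trans h2) hz', le_trans h2 hz', hz'⟩

theorem stmt_14 : ∀ N : ℕ, ∃ n : ℕ, 0 < n ∧ nu n ≥ N := by
  intro N
  set m := N.factorial ^ 3 with hm
  refine ⟨9 * m, by positivity, ?_⟩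
  set S := {t : ℕ × ℕ × ℕ |
    t.1 ≤ t.2.1 ∧ t.2.1 ≤ t.2.2 ∧ t.1 + 1 ≤ t.2.2 ∧ F t.1 t.2.1 t.2.2 = (9 * m : ℕ)} with hS
  have hfin : S.Finite := S_finite (9 * m)
  set f : ℕ → ℕ × ℕ × ℕ := fun d => (m / d ^ 2 - d, m / d ^ 2, m / d ^ 2 + d) with hf
  have hdvd : ∀ d ∈ Finset.Icc 1 N, d ^ 2 ∣ m ∧ d ≤ m / d ^ 2 := by
    intro d hd
    simp only [Finset.mem_Icc] at hd
    have hdf : d ∣ N.factorial := Nat.dvd_factorial hd.1 hd.2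
    have hdN : d ≤ N.factorial := Nat.le_of_dvd N.factorial_pos hdf
    have hdvd2 : d ^ 2 ∣ m := by
      rw [hm]
      exact dvd_trans (pow_dvd_pow_of_dvd hdf 2) (pow_dvd_pow _ (by norm_num))
    refine ⟨hdvd2, ?_⟩
    rw [Nat.le_div_iff_mul_le (pow_pos hd.1 2)]
    calc d * d ^ 2 = d ^ 3 := by ring
    _ ≤ N.factorial ^ 3 := Nat.pow_le_pow_left hdN 3
  have hmem : ∀ d ∈ Finset.Icc 1 N, f d ∈ S := by
    intro d hd
    obtain ⟨hdvd2, hk⟩ := hdvd d hd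
    simp only [Finset.mem_Icc] at hd
    set k := m / d ^ 2 with hkdef
    have hkm : d ^ 2 * k = m := Nat.mul_div_cancel' hdvd2
    show (k - d, k, k + d) ∈ S
    refine ⟨Nat.sub_le k d, Nat.le_add_right k d, show k - d + 1 ≤ k + d by omega, ?_⟩
    · show F (k - d) k (k + d) = ((9 * m : ℕ) : ℤ)
      have hcast : ((k - d : ℕ) : ℤ) = (k : ℤ) - d := by
        push_cast [Nat.cast_sub hk]; ring
      have hm' : ((9 * m : ℕ) : ℤ) = 9 * ((d : ℤ) ^ 2 * k) := by
        rw [← hkm]; push_cast; ring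
      rw [F, hcast, hm']
      push_cast
      ring
  have hinj : Set.InjOn f (Finset.Icc 1 N : Set ℕ) := by
    intro a _ b _ hab
    simp only [hf, Prod.mk.injEq] at hab
    omega
  have himg : f '' (Finset.Icc 1 N : Set ℕ) ⊆ S := by
    rintro _ ⟨d, hd, rfl⟩
    exact hmem d (by exact_mod_cast hd)
  have hcard : (f '' (Finset.Icc 1 N : Set ℕ)).ncard = N := by
    rw [Set.ncard_image_of_injOn hinj, Set.ncard_coe_finset, Nat.card_Icc]; omega
  calc N = (f '' (Finset.Icc 1 N : Set ℕ)).ncard := hcard.symm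
  _ ≤ S.ncard := Set.ncard_le_ncard himg hfin
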